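/- Let (R, m) be a commutative Noetherian local ring and I a proper weakly m-full ideal with (I : m) ≠ I. If Ext_R^1(I, I) = Ext_R^2(I, I) = 0, then I is a free R-module, i.e., I ≅ R. -/

import Mathlib

open CategoryTheory IsLocalRing

noncomputable section

universe u

variable (R : Type u) [CommRing R]

/-- `Ext_R^n(M, N)` vanishes. -/
def extVanish (n : ℕ) (M N : ModuleCat.{u} R) : Prop :=
  Subsingleton (((Ext R (ModuleCat.{u} R) n).obj (Opposite.op M)).obj N)

/-- `Tor_n^R(M, N)` vanishes. -/
def torVanish (n : ℕ) (M N : ModuleCat.{u} R) : Prop :=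
  Subsingleton (((Tor (ModuleCat.{u} R) n).obj M).obj N)

/-- The projective dimension of `M` is at most `n`, characterized by vanishing of
`Ext^i(M, -)` for all `i > n`. -/
def pdLE (M : ModuleCat.{u} R) (n : ℕ) : Prop :=
  ∀ (N : ModuleCat.{u} R) (i : ℕ), n < i → extVanish R i M N

/-- The injective dimension of `N` is at most `n`, characterized by vanishing of
`Ext^i(-, N)` for all `i > n`. -/
def idLE (N : ModuleCat.{u} R) (n : ℕ) : Prop :=
  ∀ (M : ModuleCat.{u} R) (i : ℕ), n < i → extVanish R i M N

/-- The injective dimension of `N` is finite. -/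
def idFinite (N : ModuleCat.{u} R) : Prop :=
  ∃ n : ℕ, idLE R N n

/-- `N` is 2-Tor-rigid: vanishing of two consecutive Tor's against any finitely generated
module forces vanishing of all the subsequent ones. -/
def twoTorRigid (N : ModuleCat.{u} R) : Prop :=
  ∀ (M : ModuleCat.{u} R), Module.Finite R M → ∀ n : ℕ,
    torVanish R n M N → torVanish R (n + 1) M N → ∀ i : ℕ, n ≤ i → torVanish R i M N

variable [IsLocalRing R]

/-- A local ring is regular if its maximal ideal is generated by a regular sequence. -/
def isRegularLocal : Prop :=
  ∃ rs : List R, RingTheory.Sequence.IsRegular R rs ∧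
    Ideal.span {x | x ∈ rs} = maximalIdeal R

/-- `S` is a first syzygy `Ω M` of `M`: the kernel of a minimal free cover of `M`. -/
def isSyzygyOf (S M : ModuleCat.{u} R) : Prop :=
  ∃ (d : ℕ) (f : (Fin d → R) →ₗ[R] M), Function.Surjective f ∧
    LinearMap.ker f ≤ (maximalIdeal R) • (⊤ : Submodule R (Fin d → R)) ∧
    Nonempty (S ≃ₗ[R] LinearMap.ker f)

/-- `S` is an `n`-th syzygy `Ω^n M` of `M`. -/
def isNthSyzygyOf : ℕ → ModuleCat.{u} R → ModuleCat.{u} R → Prop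
  | 0, S, M => Nonempty (S ≃ₗ[R] M)
  | n + 1, S, M => ∃ T : ModuleCat.{u} R, isSyzygyOf R T M ∧ isNthSyzygyOf n S T

/-- `T` is an Auslander transpose `Tr M` of `M`: the cokernel of the dual of the map in a
minimal free presentation of `M`. -/
def isTransposeOf (T M : ModuleCat.{u} R) : Prop :=
  ∃ (a b : ℕ) (p : (Fin a → R) →ₗ[R] M) (q : (Fin b → R) →ₗ[R] (Fin a → R)),
    Function.Surjective p ∧
    LinearMap.ker p ≤ (maximalIdeal R) • (⊤ : Submodule R (Fin a → R)) ∧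
    LinearMap.range q = LinearMap.ker p ∧
    LinearMap.ker q ≤ (maximalIdeal R) • (⊤ : Submodule R (Fin b → R)) ∧
    Nonempty (T ≃ₗ[R] (Module.Dual R (Fin b → R) ⧸ LinearMap.range q.dualMap))

section AuxLemmas

variable {R}

lemma ext_lift (M N : ModuleCat.{u} R) (P : ProjectiveResolution M) (n : ℕ)
    (h : Subsingleton (((Ext R (ModuleCat.{u} R) (n+1)).obj (Opposite.op M)).obj N))
    (ψ : P.complex.X (n+1) ⟶ N) (hψ : P.complex.d (n+2) (n+1) ≫ ψ = 0) :
    ∃ χ : P.complex.X n ⟶ N, P.complex.d (n+1) n ≫ χ = ψ := by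
  have hsub : Subsingleton ((P.complex.linearYonedaObj R N).homology (n+1)) := by
    have e := ((forget (ModuleCat R)).mapIso (P.isoExt (n+1) N)).toEquiv
    exact e.symm.subsingleton
  have hz := ModuleCat.isZero_of_subsingleton ((P.complex.linearYonedaObj R N).homology (n+1))
  have hex : (P.complex.linearYonedaObj R N).ExactAt (n+1) :=
    ((P.complex.linearYonedaObj R N).exactAt_iff_isZero_homology (n+1)).2 hz
  rw [HomologicalComplex.exactAt_iff' _ n (n+1) (n+2) (by simp) (by simp)] at hex
  rw [ShortComplex.moduleCat_exact_iff] at hex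
  obtain ⟨χ, hχ⟩ := hex ψ (by
    show ((P.complex.linearYonedaObj R N).d (n+1) (n+2)) ψ = 0
    rw [ChainComplex.linearYonedaObj_d]
    exact hψ)
  refine ⟨χ, ?_⟩
  rw [show ((P.complex.linearYonedaObj R N).sc' n (n+1) (n+2)).f
      = ((P.complex.linearYonedaObj R N).d n (n+1)) from rfl,
    ChainComplex.linearYonedaObj_d] at hχ
  exact hχ

/-- Module-theoretic projectivity of the objects of a projective resolution. -/
lemma projRes_module_projective (M : ModuleCat.{u} R) (P : ProjectiveResolution M) (i : ℕ) :
    Module.Projective R (P.complex.X i) :=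
  (IsProjective.iff_projective (P.complex.X i)).2 (by rw [ModuleCat.of_coe]; infer_instance)

/-- First extension principle: if `Ext¹(M,N) = 0`, then for a projective presentation
`0 → ker pr → A → M → 0`, every map `ker pr → N` extends to `A`. -/
lemma extend_of_ext_one (M N : ModuleCat.{u} R) (P : ProjectiveResolution M)
    {A : Type u} [AddCommGroup A] [Module R A] [Module.Projective R A]
    (pr : A →ₗ[R] M) (hpr : Function.Surjective pr)
    (h1 : Subsingleton (((Ext R (ModuleCat.{u} R) 1).obj (Opposite.op M)).obj N))
    (φ : ↥(LinearMap.ker pr) →ₗ[R] N) :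
    ∃ Φ : A →ₗ[R] N, ∀ s : ↥(LinearMap.ker pr), Φ s.1 = φ s := by
  classical
  haveI := projRes_module_projective M P 0
  haveI := projRes_module_projective M P 1
  set ε : (P.complex.X 0 : Type u) →ₗ[R] M := (P.π.f 0 : P.complex.X 0 ⟶ M).hom with hε
  have hεsurj : Function.Surjective ε := by
    have : Epi (P.π.f 0) := inferInstance
    exact (ModuleCat.epi_iff_surjective (P.π.f 0)).1 this
  have exact0 : ∀ y : P.complex.X 0, ε y = 0 → ∃ z : P.complex.X 1, P.complex.d 1 0 z = y := by
    have h := P.exact₀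
    rw [ShortComplex.moduleCat_exact_iff] at h
    exact h
  -- comparison maps
  obtain ⟨u₀, hu₀⟩ := Module.projective_lifting_property pr ε hpr
  obtain ⟨w₀, hw₀⟩ := Module.projective_lifting_property ε pr hεsurj
  have hu₀' : ∀ z, pr (u₀ z) = ε z := fun z => LinearMap.congr_fun hu₀ z
  have hw₀' : ∀ f, ε (w₀ f) = pr f := fun f => LinearMap.congr_fun hw₀ f
  have hd₁ε : ∀ z : P.complex.X 1, ε (P.complex.d 1 0 z) = 0 := by
    intro z
    exact LinearMap.congr_fun (congrArg ModuleCat.Hom.hom P.complex_d_comp_π_f_zero) z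
  -- v : P₁ → ker pr
  set v : (P.complex.X 1 : Type u) →ₗ[R] ↥(LinearMap.ker pr) :=
    LinearMap.codRestrict (LinearMap.ker pr)
      (u₀ ∘ₗ (P.complex.d 1 0 : P.complex.X 1 ⟶ P.complex.X 0).hom)
      (fun z => by
        simp only [LinearMap.mem_ker, LinearMap.comp_apply]
        rw [hu₀']
        exact hd₁ε z) with hv
  have hvval : ∀ z, ((v z : ↥(LinearMap.ker pr)) : A) = u₀ (P.complex.d 1 0 z) := fun z => rfl
  -- the cocycle
  set ψ : P.complex.X 1 ⟶ N := ModuleCat.ofHom (φ ∘ₗ v : (P.complex.X 1 : Type u) →ₗ[R] N) with hψdef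
  have hψ : P.complex.d 2 1 ≫ ψ = 0 := by
    apply ModuleCat.hom_ext
    apply LinearMap.ext
    intro t
    show ψ (P.complex.d 2 1 t) = 0
    have hvz : v (P.complex.d 2 1 t) = 0 := by
      apply Subtype.ext
      rw [hvval]
      have : P.complex.d 1 0 (P.complex.d 2 1 t) = 0 := by
        exact LinearMap.congr_fun (congrArg ModuleCat.Hom.hom (P.complex.d_comp_d 2 1 0)) t
      rw [this]
      simp
    show φ (v (P.complex.d 2 1 t)) = 0
    rw [hvz, map_zero]
  obtain ⟨χ, hχ⟩ := ext_lift M N P 0 h1 ψ hψ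
  have hχ' : ∀ z, χ (P.complex.d 1 0 z) = φ (v z) := by
    intro z
    exact LinearMap.congr_fun (congrArg ModuleCat.Hom.hom hχ) z
  -- the correction map g
  set g : A →ₗ[R] ↥(LinearMap.ker pr) :=
    LinearMap.codRestrict (LinearMap.ker pr) ((u₀ ∘ₗ w₀) - LinearMap.id)
      (fun f => by
        simp only [LinearMap.mem_ker, LinearMap.sub_apply, LinearMap.comp_apply,
          LinearMap.id_apply, map_sub]
        rw [hu₀', hw₀', sub_self]) with hg
  have hgval : ∀ f, ((g f : ↥(LinearMap.ker pr)) : A) = u₀ (w₀ f) - f := fun f => rfl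
  refine ⟨χ.hom ∘ₗ w₀ - φ ∘ₗ g, fun s => ?_⟩
  have hsker : ε (w₀ s.1) = 0 := by rw [hw₀']; exact s.2
  obtain ⟨z, hz⟩ := exact0 _ hsker
  have h1' : χ (w₀ s.1) = φ (v z) := by rw [← hz, hχ']
  have h2' : v z - g s.1 = s := by
    apply Subtype.ext
    push_cast [hvval, hgval]
    rw [hz]
    abel
  show χ (w₀ s.1) - φ (g s.1) = φ s
  rw [h1', ← map_sub, h2']

/-- Second extension principle: if `Ext²(M,N) = 0`, then for a two-step projective presentation
`A₁ → A → M` every map `ker pr₁ → N` extends to `A₁`. -/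
lemma extend_of_ext_two (M N : ModuleCat.{u} R) (P : ProjectiveResolution M)
    {A : Type u} [AddCommGroup A] [Module R A] [Module.Projective R A]
    (pr : A →ₗ[R] M) (hpr : Function.Surjective pr)
    {A₁ : Type u} [AddCommGroup A₁] [Module R A₁] [Module.Projective R A₁]
    (pr₁ : A₁ →ₗ[R] ↥(LinearMap.ker pr)) (hpr₁ : Function.Surjective pr₁)
    (h2 : Subsingleton (((Ext R (ModuleCat.{u} R) 2).obj (Opposite.op M)).obj N))
    (φ : ↥(LinearMap.ker pr₁) →ₗ[R] N) :
    ∃ Φ : A₁ →ₗ[R] N, ∀ s : ↥(LinearMap.ker pr₁), Φ s.1 = φ s := by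
  classical
  haveI := projRes_module_projective M P 0
  haveI := projRes_module_projective M P 1
  haveI := projRes_module_projective M P 2
  set ε : (P.complex.X 0 : Type u) →ₗ[R] M := (P.π.f 0 : P.complex.X 0 ⟶ M).hom with hε
  have hεsurj : Function.Surjective ε :=
    (ModuleCat.epi_iff_surjective (P.π.f 0)).1 inferInstance
  have exact0 : ∀ y : P.complex.X 0, ε y = 0 → ∃ z : P.complex.X 1, P.complex.d 1 0 z = y := by
    have h := P.exact₀
    rw [ShortComplex.moduleCat_exact_iff] at h
    exact h
  have exact1 : ∀ z : P.complex.X 1, P.complex.d 1 0 z = 0 →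
      ∃ t : P.complex.X 2, P.complex.d 2 1 t = z := by
    have h := P.exact_succ 0
    rw [ShortComplex.moduleCat_exact_iff] at h
    exact h
  obtain ⟨u₀, hu₀⟩ := Module.projective_lifting_property pr ε hpr
  obtain ⟨w₀, hw₀⟩ := Module.projective_lifting_property ε pr hεsurj
  have hu₀' : ∀ z, pr (u₀ z) = ε z := fun z => LinearMap.congr_fun hu₀ z
  have hw₀' : ∀ f, ε (w₀ f) = pr f := fun f => LinearMap.congr_fun hw₀ f
  have hd₁ε : ∀ z : P.complex.X 1, ε (P.complex.d 1 0 z) = 0 := fun z =>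
    LinearMap.congr_fun (congrArg ModuleCat.Hom.hom P.complex_d_comp_π_f_zero) z
  set v : (P.complex.X 1 : Type u) →ₗ[R] ↥(LinearMap.ker pr) :=
    LinearMap.codRestrict (LinearMap.ker pr)
      (u₀ ∘ₗ (P.complex.d 1 0 : P.complex.X 1 ⟶ P.complex.X 0).hom)
      (fun z => by
        simp only [LinearMap.mem_ker, LinearMap.comp_apply]
        rw [hu₀']; exact hd₁ε z) with hv
  have hvval : ∀ z, ((v z : ↥(LinearMap.ker pr)) : A) = u₀ (P.complex.d 1 0 z) := fun z => rfl
  -- u₁ : P₁ → A₁ lifting v through pr₁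
  obtain ⟨u₁, hu₁⟩ := Module.projective_lifting_property pr₁ v hpr₁
  have hu₁' : ∀ z, pr₁ (u₁ z) = v z := fun z => LinearMap.congr_fun hu₁ z
  -- w₁ : A₁ → P₁ with d₁ ∘ w₁ = w₀ ∘ ι ∘ pr₁
  set K := LinearMap.ker ε with hK
  set D : (P.complex.X 1 : Type u) →ₗ[R] ↥K :=
    LinearMap.codRestrict K (P.complex.d 1 0 : P.complex.X 1 ⟶ P.complex.X 0).hom
      (fun z => by simp only [hK, LinearMap.mem_ker]; exact hd₁ε z) with hD
  have hDsurj : Function.Surjective D := by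
    rintro ⟨y, hy⟩
    obtain ⟨z, hz⟩ := exact0 y hy
    exact ⟨z, Subtype.ext hz⟩
  set t : A₁ →ₗ[R] ↥K :=
    LinearMap.codRestrict K (w₀ ∘ₗ (LinearMap.ker pr).subtype ∘ₗ pr₁)
      (fun f => by
        simp only [hK, LinearMap.mem_ker, LinearMap.comp_apply]
        rw [hw₀']
        exact (pr₁ f).2) with ht
  obtain ⟨w₁, hw₁⟩ := Module.projective_lifting_property D t hDsurj
  have hw₁' : ∀ f : A₁, P.complex.d 1 0 (w₁ f) = w₀ ((pr₁ f : ↥(LinearMap.ker pr)) : A) := by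
    intro f
    have := LinearMap.congr_fun hw₁ f
    have h2' := congrArg (Subtype.val) this
    exact h2'
  -- g and h₀
  set g : A →ₗ[R] ↥(LinearMap.ker pr) :=
    LinearMap.codRestrict (LinearMap.ker pr) ((u₀ ∘ₗ w₀) - LinearMap.id)
      (fun f => by
        simp only [LinearMap.mem_ker, LinearMap.sub_apply, LinearMap.comp_apply,
          LinearMap.id_apply, map_sub]
        rw [hu₀', hw₀', sub_self]) with hg
  have hgval : ∀ f, ((g f : ↥(LinearMap.ker pr)) : A) = u₀ (w₀ f) - f := fun f => rfl
  obtain ⟨h₀, hh₀⟩ := Module.projective_lifting_property pr₁ g hpr₁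
  have hh₀' : ∀ f, pr₁ (h₀ f) = g f := fun f => LinearMap.congr_fun hh₀ f
  -- v₂ : P₂ → ker pr₁
  have hv₂mem : ∀ w : P.complex.X 2, u₁ (P.complex.d 2 1 w) ∈ LinearMap.ker pr₁ := by
    intro w
    simp only [LinearMap.mem_ker]
    rw [hu₁']
    apply Subtype.ext
    rw [hvval]
    have hdd : P.complex.d 1 0 (P.complex.d 2 1 w) = 0 :=
      LinearMap.congr_fun (congrArg ModuleCat.Hom.hom (P.complex.d_comp_d 2 1 0)) w
    rw [hdd]
    simp
  set v₂ : (P.complex.X 2 : Type u) →ₗ[R] ↥(LinearMap.ker pr₁) :=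
    LinearMap.codRestrict (LinearMap.ker pr₁)
      (u₁ ∘ₗ (P.complex.d 2 1 : P.complex.X 2 ⟶ P.complex.X 1).hom) hv₂mem with hv₂
  have hv₂val : ∀ w, ((v₂ w : ↥(LinearMap.ker pr₁)) : A₁) = u₁ (P.complex.d 2 1 w) := fun w => rfl
  set ψ₂ : P.complex.X 2 ⟶ N := ModuleCat.ofHom (φ ∘ₗ v₂ : (P.complex.X 2 : Type u) →ₗ[R] N) with hψ₂def
  have hψ₂ : P.complex.d 3 2 ≫ ψ₂ = 0 := by
    apply ModuleCat.hom_ext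
    apply LinearMap.ext
    intro w
    show φ (v₂ (P.complex.d 3 2 w)) = 0
    have : v₂ (P.complex.d 3 2 w) = 0 := by
      apply Subtype.ext
      rw [hv₂val]
      have hdd : P.complex.d 2 1 (P.complex.d 3 2 w) = 0 :=
        LinearMap.congr_fun (congrArg ModuleCat.Hom.hom (P.complex.d_comp_d 3 2 1)) w
      rw [hdd]
      simp
    rw [this, map_zero]
  obtain ⟨χ, hχ⟩ := ext_lift M N P 1 h2 ψ₂ hψ₂
  have hχ' : ∀ w, χ (P.complex.d 2 1 w) = φ (v₂ w) := fun w => LinearMap.congr_fun (congrArg ModuleCat.Hom.hom hχ) w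
  -- h₁' : A₁ → ker pr₁
  have hh₁'mem : ∀ f : A₁,
      ((u₁ ∘ₗ w₁ - LinearMap.id - h₀ ∘ₗ (LinearMap.ker pr).subtype ∘ₗ pr₁ : A₁ →ₗ[R] A₁)) f ∈
        LinearMap.ker pr₁ := by
    intro f
    simp only [LinearMap.mem_ker, LinearMap.sub_apply, LinearMap.comp_apply, LinearMap.id_apply,
      map_sub]
    rw [hu₁', hh₀']
    apply Subtype.ext
    push_cast [hvval, hgval]
    rw [hw₁']
    simp only [Submodule.subtype_apply]
    abel
  set h₁' : A₁ →ₗ[R] ↥(LinearMap.ker pr₁) :=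
    LinearMap.codRestrict (LinearMap.ker pr₁)
      ((u₁ ∘ₗ w₁ - LinearMap.id - h₀ ∘ₗ (LinearMap.ker pr).subtype ∘ₗ pr₁ : A₁ →ₗ[R] A₁)) hh₁'mem with hh₁'
  have hh₁'val : ∀ f, ((h₁' f : ↥(LinearMap.ker pr₁)) : A₁)
      = u₁ (w₁ f) - f - h₀ ((pr₁ f : ↥(LinearMap.ker pr)) : A) := fun f => rfl
  refine ⟨χ.hom ∘ₗ w₁ - φ ∘ₗ h₁', fun s => ?_⟩
  -- s ∈ ker pr₁
  have hprs : pr₁ s.1 = 0 := s.2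
  have hds : P.complex.d 1 0 (w₁ s.1) = 0 := by
    rw [hw₁', hprs]
    simp
  obtain ⟨tt, htt⟩ := exact1 _ hds
  have hA : χ (w₁ s.1) = φ (v₂ tt) := by rw [← htt, hχ']
  have hB : v₂ tt - h₁' s.1 = s := by
    apply Subtype.ext
    push_cast [hv₂val, hh₁'val]
    rw [htt, hprs]
    simp only [ZeroMemClass.coe_zero, map_zero]
    abel
  show χ (w₁ s.1) - φ (h₁' s.1) = φ s
  rw [hA, ← map_sub, hB]

/-- Factoring a linear map through a surjection whose kernel it kills. -/
lemma factor_surjective {A B C : Type u} [AddCommGroup A] [AddCommGroup B] [AddCommGroup C]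
    [Module R A] [Module R B] [Module R C]
    (q : A →ₗ[R] B) (hq : Function.Surjective q) (T : A →ₗ[R] C)
    (h : LinearMap.ker q ≤ LinearMap.ker T) :
    ∃ w : B →ₗ[R] C, ∀ a : A, w (q a) = T a := by
  refine ⟨((LinearMap.ker q).liftQ T h).comp
    (LinearMap.quotKerEquivOfSurjective q hq).symm.toLinearMap, fun a => ?_⟩
  have h1 : (LinearMap.quotKerEquivOfSurjective q hq) (Submodule.Quotient.mk a) = q a := by
    simp [LinearMap.quotKerEquivOfSurjective]
  have h2 : (LinearMap.quotKerEquivOfSurjective q hq).symm (q a) = Submodule.Quotient.mk a :=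
    (LinearEquiv.symm_apply_eq _).2 h1.symm
  simp [h2]

/-- Membership in `m • ⊤` inside an ideal, in terms of the product ideal. -/
lemma mem_smul_top_iff (m J : Ideal R) (z : ↥J) :
    z ∈ (m • ⊤ : Submodule R ↥J) ↔ (z : R) ∈ m * J := by
  rw [← Ideal.smul_eq_mul]
  have hmap : Submodule.map J.subtype (m • ⊤ : Submodule R ↥J) = m • (J : Submodule R R) := by
    rw [Submodule.map_smul'', Submodule.map_subtype_top]
  constructor
  · intro hz
    have := Submodule.mem_map_of_mem (f := J.subtype) hz
    rwa [hmap] at this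
  · intro hz
    rw [← hmap] at hz
    obtain ⟨w, hw, hwz⟩ := hz
    have : w = z := Subtype.ext hwz
    rwa [← this]

/-- Nakayama: a submodule which is everything modulo `m` is everything. -/
lemma nakayama_reach [IsLocalRing R] {M : Type u} [AddCommGroup M] [Module R M]
    [Module.Finite R M] (W : Submodule R M)
    (h : ∀ z : M, ∃ w ∈ W, z - w ∈ (IsLocalRing.maximalIdeal R • ⊤ : Submodule R M)) :
    ∀ z : M, z ∈ W := by
  set m := IsLocalRing.maximalIdeal R
  have hQ : ∀ q : M ⧸ W, q ∈ (m • ⊤ : Submodule R (M ⧸ W)) := by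
    intro q
    obtain ⟨z, rfl⟩ := Submodule.Quotient.mk_surjective W q
    obtain ⟨w, hw, hzw⟩ := h z
    have h1 : (Submodule.Quotient.mk z : M ⧸ W) = Submodule.Quotient.mk (z - w) := by
      rw [Submodule.Quotient.mk_sub]
      rw [(Submodule.Quotient.mk_eq_zero W).2 hw]
      abel
    rw [h1]
    have h2 := Submodule.mem_map_of_mem (f := W.mkQ) hzw
    rw [Submodule.map_smul''] at h2
    have h3 : Submodule.map W.mkQ ⊤ = ⊤ := by
      rw [Submodule.map_top, Submodule.range_mkQ]
    rw [h3] at h2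
    exact h2
  have hbot : (⊤ : Submodule R (M ⧸ W)) = ⊥ := by
    apply Submodule.eq_bot_of_le_smul_of_le_jacobson_bot m ⊤ (Module.finite_def.1 inferInstance)
    · exact fun q _ => hQ q
    · rw [IsLocalRing.jacobson_eq_maximalIdeal ⊥ bot_ne_top]
  intro z
  rw [← Submodule.Quotient.mk_eq_zero W]
  have := hbot ▸ (Submodule.mem_top : (Submodule.Quotient.mk z : M ⧸ W) ∈ ⊤)
  simpa using this

end AuxLemmas

set_option maxHeartbeats 1000000 in
/-- Let `(R, m)` be a Noetherian local ring and `I` a proper weakly `m`-full ideal with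
`(I : m) ≠ I`. If `Ext^1(I, I) = Ext^2(I, I) = 0`, then `I` is free, i.e. `I ≅ R`. -/
theorem stmt11 [IsNoetherianRing R]
    (I : Ideal R) (hI : I ≠ ⊤)
    (hwmf : Submodule.colon (maximalIdeal R * I) (maximalIdeal R) = I)
    (hdepth : Submodule.colon I (maximalIdeal R) ≠ I)
    (h1 : extVanish R 1 (ModuleCat.of R I) (ModuleCat.of R I))
    (h2 : extVanish R 2 (ModuleCat.of R I) (ModuleCat.of R I)) :
    Nonempty (I ≃ₗ[R] R) := by
  classical
  set m : Ideal R := maximalIdeal R with hmdef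
  -- I is nonzero
  have hIbot : I ≠ ⊥ := by
    intro h
    apply hdepth
    rw [h] at hwmf ⊢
    rwa [Ideal.mul_bot] at hwmf
  -- the Burch element e = a * x
  have hIcolon : I ≤ Submodule.colon I m := by
    intro r hr
    refine Submodule.mem_colon.2 (fun p hp => ?_)
    rw [smul_eq_mul]
    exact I.mul_mem_right p hr
  obtain ⟨x, hxc, hxI⟩ : ∃ x, x ∈ Submodule.colon I m ∧ x ∉ I := by
    by_contra hcon
    push_neg at hcon
    exact hdepth (le_antisymm hcon hIcolon)
  have hxm : ∀ y ∈ m, y * x ∈ I := by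
    intro y hy
    have := Submodule.mem_colon.1 hxc y hy
    rwa [smul_eq_mul, mul_comm] at this
  obtain ⟨a, ham, heI, hemI⟩ : ∃ a, a ∈ m ∧ a * x ∈ I ∧ a * x ∉ m * I := by
    by_contra hcon
    push_neg at hcon
    apply hxI
    rw [← hwmf]
    refine Submodule.mem_colon.2 (fun p hp => ?_)
    rw [smul_eq_mul, mul_comm x p]
    exact hcon p hp (hxm p hp)
  set e : R := a * x with hedef
  have hunit : ∀ r : R, r * e ∈ m * I → r ∈ m := by
    intro r hr
    by_contra hrm
    have hu : IsUnit r := by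
      by_contra hnu
      exact hrm (IsLocalRing.mem_maximalIdeal r |>.2 hnu)
    obtain ⟨u, rfl⟩ := hu
    apply hemI
    have h3 : (e : R) = ↑u⁻¹ * (↑u * e) := by
      rw [← mul_assoc, Units.inv_mul, one_mul]
    rw [h3]
    exact Ideal.mul_mem_left _ _ hr
  -- residue field structure
  letI kF : Field (R ⧸ m) := Ideal.Quotient.field m
  haveI : Module.Finite R ↥I := Module.Finite.iff_fg.2 (IsNoetherian.noetherian _)
  haveI hfinV : Module.Finite (R ⧸ m) (↥I ⧸ (m • ⊤ : Submodule R ↥I)) :=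
    Module.Finite.of_restrictScalars_finite R (R ⧸ m) _
  set b := Module.finBasis (R ⧸ m) (↥I ⧸ (m • ⊤ : Submodule R ↥I)) with hbdef
  set nn := Module.finrank (R ⧸ m) (↥I ⧸ (m • ⊤ : Submodule R ↥I)) with hnn
  choose eI heI2 using fun i : Fin nn =>
    Submodule.Quotient.mk_surjective (m • ⊤ : Submodule R ↥I) (b i)
  set pr : (Fin nn → R) →ₗ[R] ↥I := (Pi.basisFun R (Fin nn)).constr ℕ eI with hprdef
  have hpr_apply : ∀ c : Fin nn → R, pr c = ∑ i, c i • eI i := by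
    intro c
    rw [hprdef, Module.Basis.constr_apply_fintype]
    simp [Pi.basisFun_equivFun]
  have hmkpr : ∀ c : Fin nn → R,
      (Submodule.Quotient.mk (pr c) : ↥I ⧸ (m • ⊤ : Submodule R ↥I))
        = ∑ i, Ideal.Quotient.mk m (c i) • b i := by
    intro c
    rw [hpr_apply, ← Submodule.mkQ_apply, map_sum]
    refine Finset.sum_congr rfl (fun i _ => ?_)
    rw [Submodule.mkQ_apply, Submodule.Quotient.mk_smul, heI2]
    rw [← Ideal.Quotient.algebraMap_eq, algebraMap_smul]
  -- surjectivity of pr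
  have hprsurj : Function.Surjective pr := by
    have hreach := nakayama_reach (R := R) (LinearMap.range pr) (fun z => ?_)
    · intro z
      obtain ⟨c, hc⟩ := hreach z
      exact ⟨c, hc⟩
    · -- z - pr c ∈ m • ⊤ for suitable c
      choose cc hcc using fun i : Fin nn =>
        Ideal.Quotient.mk_surjective (I := m) ((b.repr (Submodule.Quotient.mk z)) i)
      refine ⟨pr cc, LinearMap.mem_range_self _ _, ?_⟩
      rw [← Submodule.Quotient.mk_eq_zero, Submodule.Quotient.mk_sub, hmkpr]
      have : ∀ i, Ideal.Quotient.mk m (cc i) • b i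
          = (b.repr (Submodule.Quotient.mk z)) i • b i := by
        intro i; rw [hcc]
      rw [Finset.sum_congr rfl (fun i _ => this i)]
      rw [b.sum_repr (Submodule.Quotient.mk z)]
      abel
  -- the syzygy S
  set S := LinearMap.ker pr with hSdef
  have hSm : ∀ s : ↥S, (s : Fin nn → R) ∈ (m • ⊤ : Submodule R (Fin nn → R)) := by
    intro s
    have h0 : (Submodule.Quotient.mk (pr s.1) : ↥I ⧸ (m • ⊤ : Submodule R ↥I)) = 0 := by
      have : pr s.1 = 0 := s.2
      rw [this, Submodule.Quotient.mk_eq_zero]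
      exact Submodule.zero_mem _
    rw [hmkpr] at h0
    have hcoord : ∀ i, Ideal.Quotient.mk m ((s : Fin nn → R) i) = 0 :=
      fun i => Fintype.linearIndependent_iff.1 b.linearIndependent _ h0 i
    have hmem : ∀ i, (s : Fin nn → R) i ∈ m :=
      fun i => Ideal.Quotient.eq_zero_iff_mem.1 (hcoord i)
    have hsum : (s : Fin nn → R) = ∑ i, (s : Fin nn → R) i • fun j => if i = j then (1:R) else 0 :=
      pi_eq_sum_univ _
    rw [hsum]
    exact Submodule.sum_mem _ (fun i _ => Submodule.smul_mem_smul (hmem i) Submodule.mem_top)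
  -- presentation of S
  haveI : Module.Finite R ↥S := Module.Finite.iff_fg.2 (IsNoetherian.noetherian _)
  obtain ⟨n₁, pr₁, hpr₁⟩ := Module.Finite.exists_fin' R ↥S
  -- extension principles
  set MI : ModuleCat.{u} R := ModuleCat.of R ↥I with hMI
  set P : ProjectiveResolution MI := ProjectiveResolution.of MI with hP
  have E1 : ∀ φ : ↥S →ₗ[R] ↥I, ∃ Φ : (Fin nn → R) →ₗ[R] ↥I, ∀ s : ↥S, Φ s.1 = φ s :=
    fun φ => extend_of_ext_one MI MI P pr hprsurj h1 φ
  have E2 : ∀ φ : ↥(LinearMap.ker pr₁) →ₗ[R] ↥I,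
      ∃ Φ : (Fin n₁ → R) →ₗ[R] ↥I, ∀ s : ↥(LinearMap.ker pr₁), Φ s.1 = φ s :=
    fun φ => extend_of_ext_two MI MI P pr hprsurj pr₁ hpr₁ h2 φ
  -- the key vanishing of functionals on S
  have hrho : ∀ ρ : ↥S →ₗ[R] (R ⧸ m), ρ = 0 := by
    intro ρ
    obtain ⟨lam, hlam⟩ := Module.projective_lifting_property
      (m : Submodule R R).mkQ (ρ ∘ₗ pr₁) (Submodule.mkQ_surjective _)
    have hlam' : ∀ f, Submodule.Quotient.mk (lam f) = ρ (pr₁ f) :=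
      fun f => LinearMap.congr_fun hlam f
    have hlamm : ∀ s₂ : ↥(LinearMap.ker pr₁), lam s₂.1 ∈ m := by
      intro s₂
      rw [← Submodule.Quotient.mk_eq_zero (m : Submodule R R), hlam']
      have : pr₁ s₂.1 = 0 := s₂.2
      rw [this, map_zero]
    set ν : ↥(LinearMap.ker pr₁) →ₗ[R] ↥I :=
      LinearMap.codRestrict (I : Submodule R R)
        ((x • lam) ∘ₗ (LinearMap.ker pr₁).subtype)
        (fun s₂ => by
          simp only [LinearMap.comp_apply, LinearMap.smul_apply, Submodule.subtype_apply,
            smul_eq_mul]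
          rw [mul_comm]
          exact hxm _ (hlamm s₂)) with hν
    obtain ⟨nut, hnut⟩ := E2 ν
    set μ : (Fin n₁ → R) →ₗ[R] ↥I :=
      LinearMap.codRestrict (I : Submodule R R) (e • lam)
        (fun f => by
          simp only [LinearMap.smul_apply, smul_eq_mul]
          exact I.mul_mem_right _ heI) with hμ
    set Θ : (Fin n₁ → R) →ₗ[R] ↥I := μ - a • nut with hΘ
    have hΘker : LinearMap.ker pr₁ ≤ LinearMap.ker Θ := by
      intro f hf
      have hfs : (⟨f, hf⟩ : ↥(LinearMap.ker pr₁)).1 = f := rfl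
      simp only [LinearMap.mem_ker, hΘ, LinearMap.sub_apply, LinearMap.smul_apply]
      have h4 : nut f = ν ⟨f, hf⟩ := hnut ⟨f, hf⟩
      apply Subtype.ext
      simp only [AddSubgroupClass.coe_sub, SetLike.val_smul, h4]
      show e * lam f - a • ((x • lam) f : R) = 0
      simp only [LinearMap.smul_apply, smul_eq_mul]
      rw [hedef]
      ring
    obtain ⟨w, hw⟩ := factor_surjective pr₁ hpr₁ Θ hΘker
    obtain ⟨W, hW⟩ := E1 w
    have hWsm : ∀ fz ∈ (m • ⊤ : Submodule R (Fin nn → R)),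
        W fz ∈ (m • ⊤ : Submodule R ↥I) := by
      intro fz hfz
      refine Submodule.smul_induction_on hfz ?_ ?_
      · intro r hr z _
        rw [map_smul]
        exact Submodule.smul_mem_smul hr Submodule.mem_top
      · intro z y hz hy
        rw [map_add]
        exact Submodule.add_mem _ hz hy
    apply LinearMap.ext
    intro s
    obtain ⟨f, hf⟩ := hpr₁ s
    have h1v : w s = Θ f := by rw [← hf, hw]
    have h2v : W s.1 = w s := hW s
    have h3 : W s.1 ∈ (m • ⊤ : Submodule R ↥I) := hWsm _ (hSm s)
    have h4 : μ f ∈ (m • ⊤ : Submodule R ↥I) := by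
      have hμf : μ f = W s.1 + a • nut f := by
        rw [h2v, h1v, hΘ]
        simp only [LinearMap.sub_apply, LinearMap.smul_apply]
        abel
      rw [hμf]
      exact Submodule.add_mem _ h3 (Submodule.smul_mem_smul ham Submodule.mem_top)
    have h5 : e * lam f ∈ m * I := by
      have := (mem_smul_top_iff m I (μ f)).1 h4
      simpa [hμ] using this
    have h6 : lam f ∈ m := hunit _ (by rwa [mul_comm e (lam f)] at h5)
    show ρ s = 0
    rw [← hf, ← hlam' f, Submodule.Quotient.mk_eq_zero]
    exact h6
  -- S = ⊥
  have hSbot : S = ⊥ := by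
    have hall : ∀ s : ↥S, s ∈ (m • ⊤ : Submodule R ↥S) := by
      by_cases hQ : Subsingleton (↥S ⧸ (m • ⊤ : Submodule R ↥S))
      · intro s
        have : (Submodule.Quotient.mk s : ↥S ⧸ (m • ⊤ : Submodule R ↥S)) = 0 :=
          Subsingleton.elim _ _
        exact (Submodule.Quotient.mk_eq_zero _).1 this
      · exfalso
        have hnt : Nontrivial (↥S ⧸ (m • ⊤ : Submodule R ↥S)) :=
          not_subsingleton_iff_nontrivial.1 hQ
        haveI : Module.Finite (R ⧸ m) (↥S ⧸ (m • ⊤ : Submodule R ↥S)) :=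
          Module.Finite.of_restrictScalars_finite R (R ⧸ m) _
        have hpos : 0 < Module.finrank (R ⧸ m) (↥S ⧸ (m • ⊤ : Submodule R ↥S)) :=
          Module.finrank_pos_iff.2 hnt
        set bS := Module.finBasis (R ⧸ m) (↥S ⧸ (m • ⊤ : Submodule R ↥S)) with hbS
        set i₀ : Fin (Module.finrank (R ⧸ m) (↥S ⧸ (m • ⊤ : Submodule R ↥S))) := ⟨0, hpos⟩
        set ρ : ↥S →ₗ[R] (R ⧸ m) :=
          ((bS.coord i₀).restrictScalars R) ∘ₗ (m • ⊤ : Submodule R ↥S).mkQ with hρ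
        obtain ⟨s0, hs0⟩ := Submodule.Quotient.mk_surjective _ (bS i₀)
        have hone : ρ s0 = 1 := by
          rw [hρ]
          simp only [LinearMap.comp_apply, LinearMap.coe_restrictScalars, Submodule.mkQ_apply]
          rw [hs0]
          simp [Module.Basis.coord_apply, Module.Basis.repr_self]
        rw [hrho ρ] at hone
        simp at hone
    have hle : (⊤ : Submodule R ↥S) ≤ m • ⊤ := fun s _ => hall s
    have hbot : (⊤ : Submodule R ↥S) = ⊥ := by
      apply Submodule.eq_bot_of_le_smul_of_le_jacobson_bot m ⊤ (Module.finite_def.1 inferInstance)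
        hle
      rw [IsLocalRing.jacobson_eq_maximalIdeal ⊥ bot_ne_top]
    rw [Submodule.eq_bot_iff]
    intro c hc
    have hmem : (⟨c, hc⟩ : ↥S) ∈ (⊥ : Submodule R ↥S) := hbot ▸ Submodule.mem_top
    have : (⟨c, hc⟩ : ↥S) = 0 := hmem
    exact congrArg Subtype.val this
  -- pr is an isomorphism
  have hinj : Function.Injective pr := by
    rw [← LinearMap.ker_eq_bot]
    exact hSbot
  set eqv : (Fin nn → R) ≃ₗ[R] ↥I := LinearEquiv.ofBijective pr ⟨hinj, hprsurj⟩ with heqv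
  -- nn = 1
  have hnn0 : nn ≠ 0 := by
    intro h0
    apply hIbot
    haveI : Subsingleton (Fin nn → R) := by
      rw [h0]; infer_instance
    haveI hsub : Subsingleton ↥I := eqv.toEquiv.symm.subsingleton
    rw [Submodule.eq_bot_iff]
    intro z hz
    have : (⟨z, hz⟩ : ↥I) = 0 := Subsingleton.elim _ _
    exact congrArg Subtype.val this
  have hnn1 : nn = 1 := by
    by_contra hne
    have h2le : 2 ≤ nn := by omega
    set i0 : Fin nn := ⟨0, by omega⟩ with hi0
    set i1 : Fin nn := ⟨1, by omega⟩ with hi1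
    have hne01 : i0 ≠ i1 := by
      simp [hi0, hi1, Fin.ext_iff]
    set uu : ↥I := eqv (Pi.single i0 1) with huu
    set vv : ↥I := eqv (Pi.single i1 1) with hvv
    set c : Fin nn → R := (vv : R) • (Pi.single i0 1 : Fin nn → R) - (uu : R) • (Pi.single i1 1 : Fin nn → R) with hc
    have hcz : eqv c = 0 := by
      rw [hc, map_sub, map_smul, map_smul, ← huu, ← hvv]
      apply Subtype.ext
      simp only [AddSubgroupClass.coe_sub, SetLike.val_smul, smul_eq_mul]
      rw [mul_comm]
      abel_nf
      simp
    have hc0 : c = 0 := by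
      have := eqv.injective (by rw [hcz, map_zero] : eqv c = eqv 0)
      exact this
    have hvv0 : (vv : R) = 0 := by
      have := congrFun hc0 i0
      simpa [hc, Pi.single_eq_same, Pi.single_eq_of_ne hne01] using this
    have hsingle : (Pi.single i1 1 : Fin nn → R) = 0 := by
      have hvvz : vv = 0 := Subtype.ext hvv0
      have := eqv.injective (by rw [← hvv, hvvz, map_zero] : eqv (Pi.single i1 1) = eqv 0)
      exact this
    have : (1 : R) = 0 := by
      have := congrFun hsingle i1
      simpa [Pi.single_eq_same] using this
    exact one_ne_zero this
  refine ⟨?_⟩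
  have e1 : (Fin nn → R) ≃ₗ[R] (Fin 1 → R) :=
    LinearEquiv.funCongrLeft R R (finCongr hnn1).symm
  exact eqv.symm.trans (e1.trans (LinearEquiv.funUnique (Fin 1) R R))
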